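/- Let A be a ℤ₂-graded commutative algebra with odd derivation Q satisfying Q² = 0, and define [f,g]_Q := (-1)^{|f|} Q(f)g + f Q(g). Then the graded Jacobi identity holds: (-1)^{(|f|+1)(|h|+1)}[f,[g,h]_Q]_Q + (-1)^{(|g|+1)(|f|+1)}[g,[h,f]_Q]_Q + (-1)^{(|h|+1)(|g|+1)}[h,[f,g]_Q]_Q = 0 for all homogeneous f, g, h. -/

import Mathlib

/-- The derived odd bracket `[f,g]_Q = (-1)^{|f|} Q(f·g)` of a homological odd
derivation `Q`, for `f` homogeneous of parity `i`. -/
def brQ {A : Type*} [Ring A] [Algebra ℝ A] (Q : A → A) (i : ZMod 2) (f g : A) : A :=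
  ((-1 : ℝ) ^ i.val) • Q (f * g)

/-- Graded Jacobi identity for the derived bracket. -/
theorem bracket_jacobi
    {A : Type*} [Ring A] [Algebra ℝ A]
    (𝒜 : ZMod 2 → Submodule ℝ A)
    (hone : (1 : A) ∈ 𝒜 0)
    (hmul : ∀ (i j : ZMod 2) (f g : A), f ∈ 𝒜 i → g ∈ 𝒜 j → f * g ∈ 𝒜 (i + j))
    (hscomm : ∀ (i j : ZMod 2) (f g : A), f ∈ 𝒜 i → g ∈ 𝒜 j →
      f * g = ((-1 : ℝ) ^ (i.val * j.val)) • (g * f))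
    (Q : A → A)
    (hQadd : ∀ f g : A, Q (f + g) = Q f + Q g)
    (hQsmul : ∀ (r : ℝ) (f : A), Q (r • f) = r • Q f)
    (hQodd : ∀ (i : ZMod 2) (f : A), f ∈ 𝒜 i → Q f ∈ 𝒜 (i + 1))
    (hQleib : ∀ (i : ZMod 2) (f g : A), f ∈ 𝒜 i →
      Q (f * g) = Q f * g + ((-1 : ℝ) ^ i.val) • (f * Q g))
    (hQ2 : ∀ f : A, Q (Q f) = 0) :
    ∀ (i j k : ZMod 2) (f g h : A), f ∈ 𝒜 i → g ∈ 𝒜 j → h ∈ 𝒜 k →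
      ((-1 : ℝ) ^ ((i.val + 1) * (k.val + 1))) • brQ Q i f (brQ Q j g h)
        + ((-1 : ℝ) ^ ((j.val + 1) * (i.val + 1))) • brQ Q j g (brQ Q k h f)
        + ((-1 : ℝ) ^ ((k.val + 1) * (j.val + 1))) • brQ Q k h (brQ Q i f g) = 0 := by
  have swap : ∀ (p q : ZMod 2) (x y : A), x ∈ 𝒜 p → y ∈ 𝒜 q →
      y * x = ((-1 : ℝ) ^ (p.val * q.val)) • (x * y) := by
    intro p q x y hx hy
    rw [hscomm q p y x hy hx, Nat.mul_comm]
  have expand : ∀ (i j : ZMod 2) (f g h : A), f ∈ 𝒜 i → g ∈ 𝒜 j →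
      brQ Q i f (brQ Q j g h) =
        ((-1 : ℝ) ^ (i.val + j.val)) •
          (Q f * (Q g * h) + ((-1 : ℝ) ^ j.val) • (Q f * (g * Q h))) := by
    intro i j f g h hf hg
    have h1 : Q (f * Q (g * h)) = Q f * Q (g * h) := by
      rw [hQleib i f _ hf, hQ2, mul_zero, smul_zero, add_zero]
    simp only [brQ, mul_smul_comm, hQsmul, smul_smul, ← pow_add]
    rw [h1, hQleib j g h hg, mul_add, mul_smul_comm]
  intro i j k f g h hf hg hh
  rw [expand i j f g h hf hg, expand j k g h f hg hh, expand k i h f g hh hf]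
  have hQf := hQodd i f hf
  have hQg := hQodd j g hg
  have hQh := hQodd k h hh
  have e1 : Q g * (Q h * f) = ((-1 : ℝ) ^ (i.val * ((k+1).val)) * (-1) ^ (i.val * ((j+1).val))) •
      (f * (Q g * Q h)) := by
    rw [swap i (k+1) f (Q h) hf hQh, mul_smul_comm, ← mul_assoc,
      swap i (j+1) f (Q g) hf hQg, smul_mul_assoc, smul_smul, mul_assoc]
  have e2 : Q g * (h * Q f) = ((-1 : ℝ) ^ ((i+1).val * k.val) * (-1) ^ ((i+1).val * (j+1).val)) •
      (Q f * (Q g * h)) := by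
    rw [swap (i+1) k (Q f) h hQf hh, mul_smul_comm, ← mul_assoc,
      swap (i+1) (j+1) (Q f) (Q g) hQf hQg, smul_mul_assoc, smul_smul, mul_assoc]
  have e3 : Q h * (Q f * g) = ((-1 : ℝ) ^ ((i+1).val * (k+1).val) * (-1) ^ (j.val * (k+1).val)) •
      (Q f * (g * Q h)) := by
    rw [← mul_assoc, swap (i+1) (k+1) (Q f) (Q h) hQf hQh, smul_mul_assoc, mul_assoc,
      swap j (k+1) g (Q h) hg hQh, mul_smul_comm, smul_smul]
  have e4 : Q h * (f * Q g) = ((-1 : ℝ) ^ (i.val * (k+1).val) * (-1) ^ ((j+1).val * (k+1).val)) •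
      (f * (Q g * Q h)) := by
    rw [← mul_assoc, swap i (k+1) f (Q h) hf hQh, smul_mul_assoc, mul_assoc,
      swap (j+1) (k+1) (Q g) (Q h) hQg hQh, mul_smul_comm, smul_smul]
  rw [e1, e2, e3, e4]
  have hv0 : (0 : ZMod 2).val = 0 := rfl
  have hv1 : (1 : ZMod 2).val = 1 := rfl
  have hv01 : ((0 : ZMod 2) + 1).val = 1 := rfl
  have hv11 : ((1 : ZMod 2) + 1).val = 0 := rfl
  have h01 : ∀ x : ZMod 2, x = 0 ∨ x = 1 := by decide
  rcases h01 i with rfl | rfl <;> rcases h01 j with rfl | rfl <;> rcases h01 k with rfl | rfl <;>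
    simp only [Fin.isValue, Fin.mk_zero, Fin.mk_one, hv0, hv1, hv01, hv11] <;>
    norm_num <;> module
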